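/- Let G = (V, E) be a connected finite simple graph and π a sign function on G. Then some eigenvalue μ of A_π satisfies |μ| = ρ(G) if and only if there exists a diagonal matrix D with diagonal entries ±1 such that A_π = D A_G D or A_π = −D A_G D (i.e., the signed graph G_π is switching equivalent to the all-positive signed graph G_+ or to the all-negative signed graph G_−). -/

import Mathlib

open Matrix SimpleGraph

/-- The signed adjacency matrix of a graph `G` with sign function `π` on its edge set. -/
noncomputable def signedAdj {V : Type*} [Fintype V] [DecidableEq V] (G : SimpleGraph V)
    [DecidableRel G.Adj] (π : G.edgeSet → ℤˣ) : Matrix V V ℝ :=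
  Matrix.of fun u v =>
    if h : G.Adj u v then ((π ⟨s(u, v), (G.mem_edgeSet).mpr h⟩ : ℤ) : ℝ) else 0

/-- `μ` is an eigenvalue of the real matrix `A`. -/
def IsEigenvalue {V : Type*} [Fintype V] (A : Matrix V V ℝ) (μ : ℝ) : Prop :=
  ∃ x : V → ℝ, x ≠ 0 ∧ A.mulVec x = μ • x

section Aux

variable {V : Type*} [Fintype V] [DecidableEq V]

lemma aux_eig_isEigenvalue {A : Matrix V V ℝ} (hA : A.IsHermitian) (i : V) :
    IsEigenvalue A (hA.eigenvalues i) := by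
  refine ⟨hA.eigenvectorBasis i, ?_, hA.mulVec_eigenvectorBasis i⟩
  intro h
  exact hA.eigenvectorBasis.orthonormal.ne_zero i (by ext j; exact congrFun h j)

lemma aux_sub_posSemidef {A : Matrix V V ℝ} (hA : A.IsHermitian) {ρ : ℝ}
    (h : ∀ μ : ℝ, IsEigenvalue A μ → μ ≤ ρ) : (ρ • (1 : Matrix V V ℝ) - A).PosSemidef := by
  have hev : ∀ i, hA.eigenvalues i ≤ ρ := fun i => h _ (aux_eig_isEigenvalue hA i)
  have h1 : (diagonal (fun i => ρ - hA.eigenvalues i) : Matrix V V ℝ)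
      = ρ • 1 - diagonal (RCLike.ofReal ∘ hA.eigenvalues) := by
    ext i j
    by_cases hij : i = j <;> simp [diagonal, hij, Matrix.one_apply]
  have hUU : (hA.eigenvectorUnitary : Matrix V V ℝ)
      * star (hA.eigenvectorUnitary : Matrix V V ℝ) = 1 :=
    (Matrix.mem_unitaryGroup_iff).mp hA.eigenvectorUnitary.2
  have key : ρ • (1 : Matrix V V ℝ) - A =
      (hA.eigenvectorUnitary : Matrix V V ℝ) * diagonal (fun i => ρ - hA.eigenvalues i)
        * star (hA.eigenvectorUnitary : Matrix V V ℝ) := by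
    rw [h1, mul_sub, sub_mul, mul_smul_comm, smul_mul_assoc, mul_one,
      hUU, ← Unitary.conjStarAlgAut_apply (S := ℝ), ← hA.spectral_theorem]
  rw [key, Matrix.star_eq_conjTranspose]
  exact (posSemidef_diagonal_iff.mpr fun i => sub_nonneg.mpr (hev i)).mul_mul_conjTranspose_same _

lemma aux_trace_eq_sum_eig {A : Matrix V V ℝ} (hA : A.IsHermitian) :
    Matrix.trace A = ∑ i, hA.eigenvalues i := by
  conv_lhs => rw [hA.spectral_theorem]
  rw [Unitary.conjStarAlgAut_apply, Matrix.trace_mul_cycle,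
    (Matrix.mem_unitaryGroup_iff').mp hA.eigenvectorUnitary.2, Matrix.one_mul, trace_diagonal]
  simp

lemma aux_adj_isHermitian (G : SimpleGraph V) [DecidableRel G.Adj] :
    (G.adjMatrix ℝ).IsHermitian := by
  rw [Matrix.IsHermitian, conjTranspose_eq_transpose_of_trivial, transpose_adjMatrix]

/-- The largest eigenvalue of the adjacency matrix of a connected graph is nonnegative. -/
lemma aux_rho_nonneg {G : SimpleGraph V} [DecidableRel G.Adj] (hG : G.Connected) {ρ : ℝ}
    (hmax : ∀ μ : ℝ, IsEigenvalue (G.adjMatrix ℝ) μ → μ ≤ ρ) : 0 ≤ ρ := by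
  have hA := aux_adj_isHermitian G
  by_contra hneg
  push_neg at hneg
  have hcard : 0 < Fintype.card V := Fintype.card_pos_iff.mpr hG.nonempty
  have h0 : (0 : ℝ) = ∑ i, hA.eigenvalues i := by
    rw [← aux_trace_eq_sum_eig hA, trace_adjMatrix]
  have hle : ∑ i, hA.eigenvalues i ≤ ∑ _i : V, ρ :=
    Finset.sum_le_sum fun i _ => hmax _ (aux_eig_isEigenvalue hA i)
  rw [Finset.sum_const, Finset.card_univ, nsmul_eq_mul] at hle
  have : (0 : ℝ) < Fintype.card V := by exact_mod_cast hcard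
  nlinarith [h0 ▸ hle]

/-- Entrywise positivity of a nonnegative eigenvector of a connected graph. -/
lemma aux_pos {G : SimpleGraph V} [DecidableRel G.Adj] (hG : G.Connected)
    {ρ : ℝ} {y : V → ℝ} (hy : ∀ v, 0 ≤ y v) (hAy : G.adjMatrix ℝ *ᵥ y = ρ • y)
    (hy0 : y ≠ 0) : ∀ v, 0 < y v := by
  have hcl : ∀ v w, y v = 0 → G.Adj v w → y w = 0 := by
    intro v w hv hvw
    have h1 : ∑ u, G.adjMatrix ℝ v u * y u = 0 := by
      have := congrFun hAy v
      simp only [Matrix.mulVec, dotProduct, Pi.smul_apply, smul_eq_mul] at this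
      rw [this, hv, mul_zero]
    have hterm := (Finset.sum_eq_zero_iff_of_nonneg (fun u _ =>
      mul_nonneg (by simp [adjMatrix_apply]; split <;> norm_num) (hy u))).mp h1 w
      (Finset.mem_univ w)
    simpa [adjMatrix_apply, hvw] using hterm
  have hwalk : ∀ {a b : V} (_ : G.Walk a b), y a = 0 → y b = 0 := by
    intro a b p
    induction p with
    | nil => exact id
    | cons h _ ih => intro ha; exact ih (hcl _ _ ha h)
  intro v
  rcases (hy v).lt_or_eq with h | h
  · exact h
  · exfalso
    apply hy0
    funext w
    exact hwalk ((hG.preconnected v w).some) h.symm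

/-- If `|B| = A` entrywise and `B x = ρ x` with `|μ| = ρ`, then `A |x| = ρ |x|`. -/
lemma aux_abs_eigen {G : SimpleGraph V} [DecidableRel G.Adj] {ρ : ℝ}
    (hmax : ∀ μ : ℝ, IsEigenvalue (G.adjMatrix ℝ) μ → μ ≤ ρ)
    {B : Matrix V V ℝ} (hBabs : ∀ u v, |B u v| = G.adjMatrix ℝ u v)
    {μ : ℝ} {x : V → ℝ} (hBx : B *ᵥ x = μ • x) (habs : |μ| = ρ) :
    G.adjMatrix ℝ *ᵥ (fun v => |x v|) = ρ • (fun v => |x v|) := by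
  set A := G.adjMatrix ℝ with hAdef
  have hA : A.IsHermitian := aux_adj_isHermitian G
  set y : V → ℝ := fun v => |x v| with hydef
  have hstep : ∀ v, ρ * y v ≤ (A *ᵥ y) v := by
    intro v
    have h1 : (B *ᵥ x) v = μ * x v := by rw [hBx]; rfl
    calc ρ * y v = |μ * x v| := by rw [abs_mul, habs]
      _ = |∑ u, B v u * x u| := by rw [← h1]; rfl
      _ ≤ ∑ u, |B v u * x u| := Finset.abs_sum_le_sum_abs _ _
      _ = ∑ u, A v u * |x u| := by simp_rw [abs_mul, hBabs]
      _ = (A *ᵥ y) v := rfl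
  have psd := aux_sub_posSemidef hA hmax
  have hq1 : y ⬝ᵥ ((ρ • (1 : Matrix V V ℝ) - A) *ᵥ y) ≤ 0 := by
    rw [Matrix.sub_mulVec, smul_mulVec, one_mulVec]
    refine Finset.sum_nonpos fun v _ => ?_
    refine mul_nonpos_of_nonneg_of_nonpos (abs_nonneg _) ?_
    simpa using sub_nonpos.mpr (hstep v)
  have hq2 : 0 ≤ y ⬝ᵥ ((ρ • (1 : Matrix V V ℝ) - A) *ᵥ y) := by
    simpa using psd.dotProduct_mulVec_nonneg y
  have hq0 : star y ⬝ᵥ ((ρ • (1 : Matrix V V ℝ) - A) *ᵥ y) = 0 := by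
    simpa using le_antisymm hq1 hq2
  have hz := (psd.dotProduct_mulVec_zero_iff y).mp hq0
  rw [Matrix.sub_mulVec, smul_mulVec, one_mulVec, sub_eq_zero] at hz
  exact hz.symm

/-- Core sign-extraction lemma. -/
lemma aux_core {G : SimpleGraph V} [DecidableRel G.Adj] {ρ : ℝ}
    {B : Matrix V V ℝ} (hBabs : ∀ u v, |B u v| = G.adjMatrix ℝ u v)
    {x : V → ℝ} (hx : ∀ v, 0 < |x v|) (hBx : B *ᵥ x = ρ • x)
    (hAy : G.adjMatrix ℝ *ᵥ (fun v => |x v|) = ρ • (fun v => |x v|)) :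
    ∃ d : V → ℝ, (∀ v, d v = 1 ∨ d v = -1) ∧
      B = Matrix.diagonal d * G.adjMatrix ℝ * Matrix.diagonal d := by
  set A := G.adjMatrix ℝ with hAdef
  set d : V → ℝ := fun v => if 0 < x v then 1 else -1 with hd
  have hdpm : ∀ v, d v = 1 ∨ d v = -1 := by
    intro v; by_cases h : 0 < x v <;> simp [hd, h]
  have hdx : ∀ v, d v * x v = |x v| := by
    intro v
    by_cases h : 0 < x v
    · simp [hd, h, abs_of_pos h]
    · have hx' : x v < 0 := by
        rcases lt_trichotomy (x v) 0 with h' | h' | h'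
        · exact h'
        · exact absurd (by simp [h']) (hx v).ne'
        · exact absurd h' h
      simp [hd, h, abs_of_neg hx']
  have hd2 : ∀ v, d v * d v = 1 := by
    intro v; rcases hdpm v with h | h <;> rw [h] <;> norm_num
  have hdabs : ∀ v, |d v| = 1 := by
    intro v; rcases hdpm v with h | h <;> rw [h] <;> norm_num
  have key : ∀ v u, A v u * |x u| - d v * (B v u * x u) = 0 := by
    intro v
    have h1 : ∑ u, B v u * x u = ρ * x v := by
      have := congrFun hBx v
      simpa [Matrix.mulVec, dotProduct] using this
    have h2 : ∑ u, A v u * |x u| = ρ * |x v| := by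
      have := congrFun hAy v
      simpa [Matrix.mulVec, dotProduct] using this
    have hsum : ∑ u, (A v u * |x u| - d v * (B v u * x u)) = 0 := by
      rw [Finset.sum_sub_distrib, h2, ← Finset.mul_sum, h1,
        show d v * (ρ * x v) = ρ * (d v * x v) by ring, hdx v, sub_self]
    have hnn : ∀ u ∈ Finset.univ, 0 ≤ A v u * |x u| - d v * (B v u * x u) := by
      intro u _
      have : d v * (B v u * x u) ≤ |d v * (B v u * x u)| := le_abs_self _
      rw [abs_mul, abs_mul, hdabs v, hBabs v u, one_mul] at this
      linarith
    intro u
    exact (Finset.sum_eq_zero_iff_of_nonneg hnn).mp hsum u (Finset.mem_univ u)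
  refine ⟨d, hdpm, ?_⟩
  ext v u
  rw [Matrix.mul_diagonal, Matrix.diagonal_mul]
  have hxu : x u = d u * |x u| := by
    calc x u = (d u * d u) * x u := by rw [hd2 u, one_mul]
      _ = d u * (d u * x u) := by ring
      _ = d u * |x u| := by rw [hdx u]
  have hk := key v u
  have hk' : (d v * B v u * d u) * |x u| = A v u * |x u| := by
    rw [sub_eq_zero] at hk
    calc (d v * B v u * d u) * |x u| = d v * (B v u * (d u * |x u|)) := by ring
      _ = d v * (B v u * x u) := by rw [← hxu]
      _ = A v u * |x u| := hk.symm
  have hk'' : d v * B v u * d u = A v u := mul_right_cancel₀ (hx u).ne' hk'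
  calc B v u = (d v * d v) * (B v u) * (d u * d u) := by rw [hd2 v, hd2 u]; ring
    _ = d v * (d v * B v u * d u) * d u := by ring
    _ = d v * A v u * d u := by rw [hk'']

lemma aux_signedAdj_abs {G : SimpleGraph V} [DecidableRel G.Adj] (π : G.edgeSet → ℤˣ) :
    ∀ u v, |signedAdj G π u v| = G.adjMatrix ℝ u v := by
  intro u v
  by_cases h : G.Adj u v
  · rw [signedAdj]
    simp only [Matrix.of_apply, dif_pos h, adjMatrix_apply, if_pos h]
    rcases Int.units_eq_one_or (π ⟨s(u, v), (G.mem_edgeSet).mpr h⟩) with he | he <;>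
      rw [he] <;> norm_num
  · simp [signedAdj, h]

end Aux

theorem signed_spectral_radius_eq_iff_switching_equivalent
    {V : Type*} [Fintype V] [DecidableEq V] (G : SimpleGraph V) [DecidableRel G.Adj]
    (hG : G.Connected) (ρ : ℝ)
    (hρ : IsEigenvalue (G.adjMatrix ℝ) ρ)
    (hmax : ∀ μ : ℝ, IsEigenvalue (G.adjMatrix ℝ) μ → μ ≤ ρ)
    (π : G.edgeSet → ℤˣ) :
    (∃ μ : ℝ, IsEigenvalue (signedAdj G π) μ ∧ |μ| = ρ) ↔
      ∃ d : V → ℝ, (∀ v, d v = 1 ∨ d v = -1) ∧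
        (signedAdj G π = Matrix.diagonal d * G.adjMatrix ℝ * Matrix.diagonal d ∨
         signedAdj G π = -(Matrix.diagonal d * G.adjMatrix ℝ * Matrix.diagonal d)) := by
  have hBabs := aux_signedAdj_abs (G := G) π
  constructor
  · rintro ⟨μ, ⟨x, hx0, hBx⟩, habs⟩
    have hAy := aux_abs_eigen hmax hBabs hBx habs
    have hy0 : (fun v => |x v|) ≠ 0 := by
      intro h
      apply hx0
      funext v
      have := congrFun h v
      simpa [abs_eq_zero] using this
    have hypos : ∀ v, 0 < |x v| :=
      aux_pos hG (fun v => abs_nonneg _) hAy hy0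
    by_cases hEdge : ∀ u v : V, ¬ G.Adj u v
    · refine ⟨fun _ => 1, fun _ => Or.inl rfl, Or.inl ?_⟩
      ext v u
      rw [Matrix.mul_diagonal, Matrix.diagonal_mul]
      simp [signedAdj, hEdge v u, adjMatrix_apply]
    · push_neg at hEdge
      obtain ⟨a, b, hab⟩ := hEdge
      have hρpos : 0 < ρ := by
        have h2 : ∑ u, G.adjMatrix ℝ a u * |x u| = ρ * |x a| := by
          have := congrFun hAy a
          simpa [Matrix.mulVec, dotProduct] using this
        have hge : |x b| ≤ ∑ u, G.adjMatrix ℝ a u * |x u| := by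
          have := Finset.single_le_sum (f := fun u => G.adjMatrix ℝ a u * |x u|)
            (fun u _ => mul_nonneg (by simp [adjMatrix_apply]; split <;> norm_num)
              (abs_nonneg _)) (Finset.mem_univ b)
          simpa [adjMatrix_apply, hab] using this
        by_contra hle
        push_neg at hle
        have : ρ * |x a| ≤ 0 := mul_nonpos_of_nonpos_of_nonneg hle (abs_nonneg _)
        nlinarith [hypos b]
      rcases (abs_eq hρpos.le).mp habs with hμ | hμ
      · subst hμ
        obtain ⟨d, hdpm, heq⟩ := aux_core hBabs hypos hBx hAy
        exact ⟨d, hdpm, Or.inl heq⟩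
      · subst hμ
        have hBabs' : ∀ u v, |(-(signedAdj G π)) u v| = G.adjMatrix ℝ u v := by
          intro u v; rw [Matrix.neg_apply, abs_neg]; exact hBabs u v
        have hBx' : (-(signedAdj G π)) *ᵥ x = ρ • x := by
          rw [Matrix.neg_mulVec, hBx, neg_smul, neg_neg]
        obtain ⟨d, hdpm, heq⟩ := aux_core hBabs' hypos hBx' hAy
        refine ⟨d, hdpm, Or.inr ?_⟩
        rw [← heq, neg_neg]
  · rintro ⟨d, hdpm, heq⟩
    have hρnn : 0 ≤ ρ := aux_rho_nonneg hG hmax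
    obtain ⟨x, hx0, hAx⟩ := hρ
    have hDD : Matrix.diagonal d * Matrix.diagonal d = 1 := by
      rw [Matrix.diagonal_mul_diagonal]
      ext i j
      by_cases hij : i = j
      · subst hij
        rcases hdpm i with h | h <;> simp [Matrix.diagonal, Matrix.one_apply, h]
      · simp [Matrix.diagonal, Matrix.one_apply, hij]
    set z : V → ℝ := Matrix.diagonal d *ᵥ x with hz
    have hz0 : z ≠ 0 := by
      intro h
      apply hx0
      have : Matrix.diagonal d *ᵥ z = x := by
        rw [hz, Matrix.mulVec_mulVec, hDD, Matrix.one_mulVec]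
      rw [← this, h, Matrix.mulVec_zero]
    have hDAD : (Matrix.diagonal d * G.adjMatrix ℝ * Matrix.diagonal d) *ᵥ z = ρ • z := by
      rw [hz, Matrix.mulVec_mulVec, Matrix.mul_assoc, Matrix.mul_assoc, hDD, Matrix.mul_one,
        ← Matrix.mulVec_mulVec, hAx, Matrix.mulVec_smul]
    rcases heq with h | h
    · refine ⟨ρ, ⟨z, hz0, ?_⟩, abs_of_nonneg hρnn⟩
      rw [h]; exact hDAD
    · refine ⟨-ρ, ⟨z, hz0, ?_⟩, by rw [abs_neg, abs_of_nonneg hρnn]⟩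
      rw [h, Matrix.neg_mulVec, hDAD, neg_smul]
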